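/- Let A be a nonempty linear order, let a₀ ∈ A be any fixed element, and let (I u) for u : ℕ → A be a family of linear orders such that for all a, b ∈ A and every u, the order I (a::b::u) is order-isomorphic to I u. Setting X = Σₗ (u : A^ω), I u and J u = I (a₀::u), we have A ×ₗ X ≅ Σₗ (u : A^ω), J u. That is, multiplying X on the left by A replaces each fiber I u by the fiber attached to the shifted class [a₀::u]₂, interchanging the roles of I on the classes [u]₂ and [a₀::u]₂. -/

import Mathlib

/-- The sequence with first entry `a` followed by the entries of `u`. -/
def consSeq {α : Type*} (a : α) (u : ℕ → α) : ℕ → α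
  | 0 => a
  | n + 1 => u n

theorem consSeq_lt_iff {A : Type*} [LinearOrder A] {a b : A} {u v : ℕ → A} :
    toLex (consSeq a u) < toLex (consSeq b v) ↔ a < b ∨ (a = b ∧ toLex u < toLex v) := by
  constructor
  · rintro ⟨i, hlt, hi⟩
    cases i with
    | zero => exact Or.inl hi
    | succ n =>
      refine Or.inr ⟨hlt 0 (Nat.succ_pos n), ⟨n, fun j hj => hlt (j+1) (Nat.succ_lt_succ hj), hi⟩⟩
  · rintro (hab | ⟨rfl, i, hlt, hi⟩)
    · exact ⟨0, fun j hj => absurd hj (Nat.not_lt_zero j), hab⟩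
    · refine ⟨i + 1, fun j hj => ?_, hi⟩
      cases j with
      | zero => rfl
      | succ m => exact hlt m (Nat.lt_of_succ_lt_succ hj)

theorem left_mul_shifts_fibers (A : Type*) [LinearOrder A] [Nonempty A] (a₀ : A)
    (I : (ℕ → A) → Type*) [∀ u, LinearOrder (I u)]
    (h : ∀ (a b : A) (u : ℕ → A), Nonempty (I (consSeq a (consSeq b u)) ≃o I u)) :
    Nonempty
      (Lex (A × Lex (Σ u : Lex (ℕ → A), I (ofLex u))) ≃o
        Lex (Σ u : Lex (ℕ → A), I (consSeq a₀ (ofLex u)))) := by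
  classical
  letI : ∀ u : Lex (ℕ → A), LinearOrder (I u) := fun u => ‹∀ u, LinearOrder (I u)› u
  let e : ∀ (a b : A) (u : ℕ → A), I (consSeq a (consSeq b u)) ≃o I u := fun a b u => (h a b u).some
  -- the map
  set f : Lex (A × Lex (Σ u : Lex (ℕ → A), I (ofLex u))) →
      Lex (Σ u : Lex (ℕ → A), I (consSeq a₀ (ofLex u))) :=
    fun p => toLex ⟨toLex (consSeq (ofLex p).1 (ofLex (ofLex (ofLex p).2)).1),
      (e a₀ (ofLex p).1 (ofLex (ofLex (ofLex p).2)).1).symm (ofLex (ofLex p).2).2⟩ with hf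
  have hmono : StrictMono f := by
    rintro ⟨a, ⟨u, x⟩⟩ ⟨b, ⟨v, y⟩⟩ hlt
    rcases Prod.Lex.lt_iff.mp hlt with hab | ⟨rfl, h2⟩
    · exact Sigma.Lex.left _ _ (consSeq_lt_iff.mpr (Or.inl hab))
    · cases h2 with
      | left _ _ huv => exact Sigma.Lex.left _ _ (consSeq_lt_iff.mpr (Or.inr ⟨rfl, huv⟩))
      | right _ _ hxy => exact Sigma.Lex.right _ _ ((e a₀ a u).symm.strictMono hxy)
  have hsurj : Function.Surjective f := by
    rintro ⟨v, y⟩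
    obtain ⟨a, u, rfl⟩ : ∃ a u, v = toLex (consSeq a u) :=
      ⟨ofLex v 0, fun n => ofLex v (n + 1), by funext n; cases n <;> rfl⟩
    exact ⟨toLex (a, toLex ⟨toLex u, e a₀ a u y⟩), by
      simp only [hf]; exact congrArg toLex (Sigma.ext rfl (heq_of_eq ((e a₀ a u).symm_apply_apply y)))⟩
  exact ⟨hmono.orderIsoOfSurjective f hsurj⟩
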